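/- Memoryless-channel chain rule: let 𝒳, 𝒴 be finite types, Q a stochastic matrix (channel) from 𝒳 to 𝒴, n a positive integer, and let X^n = (X_1,…,X_n), C, Y^n = (Y_1,…,Y_n) be jointly distributed finite-valued random variables such that P(Y^n = y^n | X^n = x^n, C = c) = ∏_{i=1}^n Q(y_i | x_i) whenever P(X^n = x^n, C = c) > 0. Then I(X^n; Y^n | C) = ∑_{i=1}^n I(X_i; Y_i | (Y^{i−1}, C)), where Y^{i−1} = (Y_1,…,Y_{i−1}). -/

import Mathlib

open scoped BigOperators

/-- The probability that a random variable `X` on the finite probability space `(Ω, μ)`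
takes the value `a`. -/
noncomputable def prob {Ω α : Type} [Fintype Ω] [DecidableEq α]
    (μ : Ω → ℝ) (X : Ω → α) (a : α) : ℝ :=
  ∑ ω, if X ω = a then μ ω else 0

/-- Shannon entropy (natural logarithm) of `X`. -/
noncomputable def entH {Ω α : Type} [Fintype Ω] [Fintype α] [DecidableEq α]
    (μ : Ω → ℝ) (X : Ω → α) : ℝ :=
  -∑ a, prob μ X a * Real.log (prob μ X a)

/-- Conditional entropy `H(X|Y) = H(X,Y) - H(Y)`. -/
noncomputable def condH {Ω α β : Type} [Fintype Ω] [Fintype α] [DecidableEq α]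
    [Fintype β] [DecidableEq β] (μ : Ω → ℝ) (X : Ω → α) (Y : Ω → β) : ℝ :=
  entH μ (fun ω => (X ω, Y ω)) - entH μ Y

/-- Mutual information `I(X;Y) = H(X) + H(Y) - H(X,Y)`. -/
noncomputable def MI {Ω α β : Type} [Fintype Ω] [Fintype α] [DecidableEq α]
    [Fintype β] [DecidableEq β] (μ : Ω → ℝ) (X : Ω → α) (Y : Ω → β) : ℝ :=
  entH μ X + entH μ Y - entH μ (fun ω => (X ω, Y ω))

/-- Conditional mutual information
`I(X;Y|Z) = H(X,Z) + H(Y,Z) - H(X,Y,Z) - H(Z)`. -/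
noncomputable def condMI {Ω α β γ : Type} [Fintype Ω] [Fintype α] [DecidableEq α]
    [Fintype β] [DecidableEq β] [Fintype γ] [DecidableEq γ]
    (μ : Ω → ℝ) (X : Ω → α) (Y : Ω → β) (Z : Ω → γ) : ℝ :=
  entH μ (fun ω => (X ω, Z ω)) + entH μ (fun ω => (Y ω, Z ω))
    - entH μ (fun ω => (X ω, Y ω, Z ω)) - entH μ Z

/-- `A` is conditionally independent of `B` given `C`:
`P(A=a, B=b | C=c) = P(A=a|C=c)·P(B=b|C=c)` whenever `P(C=c) > 0`
(stated multiplicatively). -/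
def CondIndep {Ω α β γ : Type} [Fintype Ω] [DecidableEq α] [DecidableEq β] [DecidableEq γ]
    (μ : Ω → ℝ) (A : Ω → α) (B : Ω → β) (C : Ω → γ) : Prop :=
  ∀ a b c, 0 < prob μ C c →
    prob μ (fun ω => (A ω, B ω, C ω)) (a, b, c) * prob μ C c =
      prob μ (fun ω => (A ω, C ω)) (a, c) * prob μ (fun ω => (B ω, C ω)) (b, c)

/- ----------------------------------------------------------------
   Auxiliary lemmas
---------------------------------------------------------------- -/

lemma prob_nonneg {Ω α : Type} [Fintype Ω] [DecidableEq α]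
    (μ : Ω → ℝ) (hμ0 : ∀ ω, 0 ≤ μ ω) (X : Ω → α) (a : α) : 0 ≤ prob μ X a :=
  Finset.sum_nonneg fun ω _ => by
    split
    · exact hμ0 ω
    · exact le_rfl

lemma prob_comp {Ω α β : Type} [Fintype Ω] [Fintype α] [DecidableEq α] [DecidableEq β]
    (μ : Ω → ℝ) (Z : Ω → α) (g : α → β) (b : β) :
    prob μ (fun ω => g (Z ω)) b = ∑ a, if g a = b then prob μ Z a else 0 := by
  simp only [prob]
  calc ∑ ω, (if g (Z ω) = b then μ ω else 0)
      = ∑ ω, ∑ a, if Z ω = a then (if g a = b then μ ω else 0) else 0 := by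
        refine Finset.sum_congr rfl fun ω _ => ?_
        rw [Finset.sum_ite_eq]
        simp
    _ = ∑ a, ∑ ω, if Z ω = a then (if g a = b then μ ω else 0) else 0 := Finset.sum_comm
    _ = ∑ a, if g a = b then (∑ ω, if Z ω = a then μ ω else 0) else 0 := by
        refine Finset.sum_congr rfl fun a _ => ?_
        by_cases hg : g a = b
        · simp [hg]
        · simp [hg]

lemma entH_comp_inj {Ω α β : Type} [Fintype Ω] [Fintype α] [DecidableEq α]
    [Fintype β] [DecidableEq β] (μ : Ω → ℝ) (Z : Ω → α) (e : α → β)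
    (he : Function.Injective e) :
    entH μ (fun ω => e (Z ω)) = entH μ Z := by
  have hv : ∀ a, prob μ (fun ω => e (Z ω)) (e a) = prob μ Z a := by
    intro a
    rw [prob_comp]
    simp [he.eq_iff, Finset.sum_ite_eq']
  have h0 : ∀ b, (∀ a, e a ≠ b) → prob μ (fun ω => e (Z ω)) b = 0 := by
    intro b hb
    rw [prob_comp]
    exact Finset.sum_eq_zero fun a _ => if_neg (hb a)
  unfold entH
  congr 1
  calc ∑ b : β, prob μ (fun ω => e (Z ω)) b * Real.log (prob μ (fun ω => e (Z ω)) b)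
      = ∑ b ∈ Finset.univ.image e,
          prob μ (fun ω => e (Z ω)) b * Real.log (prob μ (fun ω => e (Z ω)) b) := by
        refine (Finset.sum_subset (Finset.subset_univ _) fun b _ hb => ?_).symm
        have hball : ∀ a, e a ≠ b := fun a ha =>
          hb (Finset.mem_image.2 ⟨a, Finset.mem_univ a, ha⟩)
        rw [h0 b hball]
        simp
    _ = ∑ a : α, prob μ (fun ω => e (Z ω)) (e a) * Real.log (prob μ (fun ω => e (Z ω)) (e a)) :=
        Finset.sum_image fun a _ a' _ h => he h
    _ = ∑ a : α, prob μ Z a * Real.log (prob μ Z a) := by simp [hv]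

lemma prod_mul_log_prod {ι : Type} (s : Finset ι) (f : ι → ℝ) :
    (∏ i ∈ s, f i) * Real.log (∏ i ∈ s, f i) = (∏ i ∈ s, f i) * ∑ i ∈ s, Real.log (f i) := by
  by_cases h : ∃ i ∈ s, f i = 0
  · obtain ⟨i, hi, h0⟩ := h
    rw [Finset.prod_eq_zero hi h0]
    simp
  · push_neg at h
    rw [Real.log_prod h]

lemma sum_pi_ite {n : ℕ} {η : Type} [Fintype η] [DecidableEq η]
    (f : Fin n → η → ℝ) (P : Fin n → Prop) [DecidablePred P] (v : ∀ k, P k → η) :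
    (∑ ys : Fin n → η, if (∀ k (h : P k), ys k = v k h) then ∏ k, f k (ys k) else 0)
      = ∏ k, if h : P k then f k (v k h) else ∑ y, f k y := by
  have step : ∀ ys : Fin n → η,
      (if (∀ k (h : P k), ys k = v k h) then ∏ k, f k (ys k) else 0)
        = ∏ k, (if h : P k then (if ys k = v k h then f k (ys k) else 0) else f k (ys k)) := by
    intro ys
    by_cases hc : ∀ k (h : P k), ys k = v k h
    · rw [if_pos hc]
      refine Finset.prod_congr rfl fun k _ => ?_
      by_cases hk : P k
      · rw [dif_pos hk, if_pos (hc k hk)]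
      · rw [dif_neg hk]
    · rw [if_neg hc]
      push_neg at hc
      obtain ⟨k, hk, hne⟩ := hc
      refine (Finset.prod_eq_zero (Finset.mem_univ k) ?_).symm
      rw [dif_pos hk, if_neg hne]
  rw [Finset.sum_congr rfl fun ys _ => step ys]
  refine Eq.trans ((Fintype.prod_sum fun k y =>
    if h : P k then (if y = v k h then f k y else 0) else f k y).symm) ?_
  refine Finset.prod_congr rfl fun k _ => ?_
  by_cases hk : P k
  · simp only [dif_pos hk]
    simp [Finset.sum_ite_eq']
  · simp only [dif_neg hk]

lemma sum_pi_mul_log {n : ℕ} {η : Type} [Fintype η] [DecidableEq η]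
    (f : Fin n → η → ℝ) (hf1 : ∀ k, ∑ y, f k y = 1) :
    ∑ ys : Fin n → η, (∏ k, f k (ys k)) * Real.log (∏ k, f k (ys k))
      = ∑ j, ∑ y, f j y * Real.log (f j y) := by
  have step : ∀ ys : Fin n → η, (∏ k, f k (ys k)) * Real.log (∏ k, f k (ys k))
      = ∑ j, ∏ k, (f k (ys k) * if k = j then Real.log (f j (ys k)) else 1) := by
    intro ys
    rw [prod_mul_log_prod, Finset.mul_sum]
    refine Finset.sum_congr rfl fun j _ => ?_
    rw [Finset.prod_mul_distrib]
    have : (∏ k, if k = j then Real.log (f j (ys k)) else 1) = Real.log (f j (ys j)) := by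
      rw [Finset.prod_ite_eq' Finset.univ j (fun k => Real.log (f j (ys k)))]
      simp
    rw [this]
  rw [Finset.sum_congr rfl fun ys _ => step ys, Finset.sum_comm]
  refine Finset.sum_congr rfl fun j _ => ?_
  have hfac : ∑ ys : Fin n → η, ∏ k, (f k (ys k) * if k = j then Real.log (f j (ys k)) else 1)
      = ∏ k, ∑ y, (f k y * if k = j then Real.log (f j y) else 1) :=
    (Fintype.prod_sum fun k y => f k y * if k = j then Real.log (f j y) else 1).symm
  rw [hfac]
  rw [Finset.prod_eq_single j (fun k _ hk => by simp [hk, hf1 k]) (by simp)]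
  simp

lemma chan_core {n : ℕ} {η : Type} [Fintype η] [DecidableEq η]
    (f : Fin n → η → ℝ) (hf1 : ∀ k, ∑ y', f k y' = 1) (i : Fin n) (y : η)
    (u : Fin i.val → η) :
    (∑ ys : Fin n → η,
        if (ys i = y ∧ (fun j : Fin i.val => ys ⟨j.val, j.isLt.trans i.isLt⟩) = u)
        then ∏ k, f k (ys k) else 0)
      = f i y * ∑ ys : Fin n → η,
          if ((fun j : Fin i.val => ys ⟨j.val, j.isLt.trans i.isLt⟩) = u)
          then ∏ k, f k (ys k) else 0 := by
  have hconv1 : ∀ ys : Fin n → η,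
      (ys i = y ∧ (fun j : Fin i.val => ys ⟨j.val, j.isLt.trans i.isLt⟩) = u)
        ↔ (∀ k (h : k.val ≤ i.val), ys k
            = if h' : k.val < i.val then u ⟨k.val, h'⟩ else y) := by
    intro ys
    constructor
    · rintro ⟨h1, h2⟩ k hk
      by_cases h' : k.val < i.val
      · rw [dif_pos h']
        exact congrFun h2 ⟨k.val, h'⟩
      · rw [dif_neg h']
        have : k = i := Fin.ext (le_antisymm hk (not_lt.1 h'))
        rw [this]; exact h1
    · intro H
      constructor
      · have := H i le_rfl
        rwa [dif_neg (lt_irrefl _)] at this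
      · funext j
        have := H ⟨j.val, j.isLt.trans i.isLt⟩ (le_of_lt j.isLt)
        dsimp only at this
        rwa [dif_pos j.isLt] at this
  have hconv2 : ∀ ys : Fin n → η,
      ((fun j : Fin i.val => ys ⟨j.val, j.isLt.trans i.isLt⟩) = u)
        ↔ (∀ k (h : k.val < i.val), ys k = u ⟨k.val, h⟩) := by
    intro ys
    constructor
    · intro h2 k hk
      exact congrFun h2 ⟨k.val, hk⟩
    · intro H
      funext j
      exact H ⟨j.val, j.isLt.trans i.isLt⟩ j.isLt
  have e1 : (∑ ys : Fin n → η,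
        if (ys i = y ∧ (fun j : Fin i.val => ys ⟨j.val, j.isLt.trans i.isLt⟩) = u)
        then ∏ k, f k (ys k) else 0)
      = ∏ k, if h : k.val ≤ i.val
          then f k (if h' : k.val < i.val then u ⟨k.val, h'⟩ else y)
          else ∑ y', f k y' := by
    rw [Finset.sum_congr rfl fun ys _ => if_congr (hconv1 ys) rfl rfl]
    exact sum_pi_ite f (fun k => k.val ≤ i.val)
      (fun k h => if h' : k.val < i.val then u ⟨k.val, h'⟩ else y)
  have e2 : (∑ ys : Fin n → η,
        if ((fun j : Fin i.val => ys ⟨j.val, j.isLt.trans i.isLt⟩) = u)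
        then ∏ k, f k (ys k) else 0)
      = ∏ k, if h : k.val < i.val then f k (u ⟨k.val, h⟩) else ∑ y', f k y' := by
    rw [Finset.sum_congr rfl fun ys _ => if_congr (hconv2 ys) rfl rfl]
    exact sum_pi_ite f (fun k => k.val < i.val) (fun k h => u ⟨k.val, h⟩)
  rw [e1, e2]
  set A : Fin n → ℝ := fun k => if h : k.val ≤ i.val
      then f k (if h' : k.val < i.val then u ⟨k.val, h'⟩ else y)
      else ∑ y', f k y' with hA
  set B : Fin n → ℝ := fun k => if h : k.val < i.val then f k (u ⟨k.val, h⟩)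
      else ∑ y', f k y' with hB
  have hAB : ∀ k, k ≠ i → A k = B k := by
    intro k hk
    rcases lt_or_ge k.val i.val with h | h
    · rw [hA, hB]
      dsimp only
      rw [dif_pos h.le, dif_pos h, dif_pos h]
    · have hne : ¬ k.val ≤ i.val := by
        rcases lt_or_eq_of_le h with h' | h'
        · exact not_le.2 h'
        · exact absurd (Fin.ext h'.symm) hk
      rw [hA, hB]
      dsimp only
      rw [dif_neg hne, dif_neg (not_lt.2 h)]
  have hAi : A i = f i y := by
    rw [hA]; dsimp only
    rw [dif_pos le_rfl, dif_neg (lt_irrefl _)]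
  have hBi : B i = 1 := by
    rw [hB]; dsimp only
    rw [dif_neg (lt_irrefl _)]
    exact hf1 i
  calc ∏ k, A k = A i * ∏ k ∈ Finset.univ.erase i, A k :=
        (Finset.mul_prod_erase Finset.univ A (Finset.mem_univ i)).symm
    _ = f i y * ∏ k ∈ Finset.univ.erase i, B k := by
        rw [hAi]
        congr 1
        exact Finset.prod_congr rfl fun k hk => hAB k (Finset.mem_erase.1 hk).1
    _ = f i y * (B i * ∏ k ∈ Finset.univ.erase i, B k) := by rw [hBi, one_mul]
    _ = f i y * ∏ k, B k := by
        rw [Finset.mul_prod_erase Finset.univ B (Finset.mem_univ i)]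

lemma condH_channel {Ω α β η : Type} [Fintype Ω] [Fintype α] [DecidableEq α]
    [Fintype β] [DecidableEq β] [Fintype η] [DecidableEq η]
    (μ : Ω → ℝ) (A : Ω → α) (W : Ω → β) (YY : Ω → η) (Q' : α → η → ℝ)
    (hq1 : ∀ a, ∑ y, Q' a y = 1)
    (h : ∀ y a w, prob μ (fun ω => (YY ω, A ω, W ω)) (y, a, w)
        = Q' a y * prob μ (fun ω => (A ω, W ω)) (a, w)) :
    entH μ (fun ω => (YY ω, A ω, W ω))
      = entH μ (fun ω => (A ω, W ω))
        - ∑ a, prob μ A a * ∑ y, Q' a y * Real.log (Q' a y) := by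
  have hA : ∀ a, prob μ A a = ∑ w, prob μ (fun ω => (A ω, W ω)) (a, w) := by
    intro a
    calc prob μ A a
        = ∑ t : α × β, if t.1 = a then prob μ (fun ω => (A ω, W ω)) t else 0 :=
          prob_comp μ (fun ω => (A ω, W ω)) Prod.fst a
      _ = ∑ a', ∑ w, if a' = a then prob μ (fun ω => (A ω, W ω)) (a', w) else 0 := by
          rw [Fintype.sum_prod_type]
      _ = ∑ w, prob μ (fun ω => (A ω, W ω)) (a, w) := by
          rw [Finset.sum_comm]
          refine Finset.sum_congr rfl fun w _ => ?_
          simp [Finset.sum_ite_eq']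
  have key : ∀ (a : α) (y : η) (w : β),
      (Q' a y * prob μ (fun ω => (A ω, W ω)) (a, w))
          * Real.log (Q' a y * prob μ (fun ω => (A ω, W ω)) (a, w))
      = prob μ (fun ω => (A ω, W ω)) (a, w) * (Q' a y * Real.log (Q' a y))
        + Q' a y * (prob μ (fun ω => (A ω, W ω)) (a, w)
            * Real.log (prob μ (fun ω => (A ω, W ω)) (a, w))) := by
    intro a y w
    rcases eq_or_ne (Q' a y) 0 with h1 | h1
    · simp [h1]
    rcases eq_or_ne (prob μ (fun ω => (A ω, W ω)) (a, w)) 0 with h2 | h2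
    · simp [h2]
    rw [Real.log_mul h1 h2]; ring
  have expand : entH μ (fun ω => (YY ω, A ω, W ω))
      = -∑ y, ∑ a, ∑ w, (Q' a y * prob μ (fun ω => (A ω, W ω)) (a, w))
          * Real.log (Q' a y * prob μ (fun ω => (A ω, W ω)) (a, w)) := by
    unfold entH
    rw [Fintype.sum_prod_type]
    congr 1
    refine Finset.sum_congr rfl fun y _ => ?_
    rw [Fintype.sum_prod_type]
    refine Finset.sum_congr rfl fun a _ => Finset.sum_congr rfl fun w _ => ?_
    rw [h y a w]
  have eAW : entH μ (fun ω => (A ω, W ω))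
      = -∑ a, ∑ w, prob μ (fun ω => (A ω, W ω)) (a, w)
          * Real.log (prob μ (fun ω => (A ω, W ω)) (a, w)) := by
    unfold entH
    rw [Fintype.sum_prod_type]
  have t1 : ∑ y, ∑ a, ∑ w, prob μ (fun ω => (A ω, W ω)) (a, w) * (Q' a y * Real.log (Q' a y))
      = ∑ a, prob μ A a * ∑ y, Q' a y * Real.log (Q' a y) := by
    rw [Finset.sum_comm]
    refine Finset.sum_congr rfl fun a _ => ?_
    calc ∑ y, ∑ w, prob μ (fun ω => (A ω, W ω)) (a, w) * (Q' a y * Real.log (Q' a y))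
        = ∑ y, (∑ w, prob μ (fun ω => (A ω, W ω)) (a, w)) * (Q' a y * Real.log (Q' a y)) := by
          refine Finset.sum_congr rfl fun y _ => ?_
          rw [Finset.sum_mul]
      _ = (∑ w, prob μ (fun ω => (A ω, W ω)) (a, w)) * ∑ y, Q' a y * Real.log (Q' a y) := by
          rw [← Finset.mul_sum]
      _ = prob μ A a * ∑ y, Q' a y * Real.log (Q' a y) := by rw [← hA a]
  have t2 : ∑ y, ∑ a, ∑ w, Q' a y * (prob μ (fun ω => (A ω, W ω)) (a, w)
        * Real.log (prob μ (fun ω => (A ω, W ω)) (a, w)))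
      = ∑ a, ∑ w, prob μ (fun ω => (A ω, W ω)) (a, w)
          * Real.log (prob μ (fun ω => (A ω, W ω)) (a, w)) := by
    rw [Finset.sum_comm]
    refine Finset.sum_congr rfl fun a _ => ?_
    calc ∑ y, ∑ w, Q' a y * (prob μ (fun ω => (A ω, W ω)) (a, w)
          * Real.log (prob μ (fun ω => (A ω, W ω)) (a, w)))
        = ∑ y, Q' a y * ∑ w, prob μ (fun ω => (A ω, W ω)) (a, w)
            * Real.log (prob μ (fun ω => (A ω, W ω)) (a, w)) := by
          refine Finset.sum_congr rfl fun y _ => ?_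
          rw [Finset.mul_sum]
      _ = (∑ y, Q' a y) * ∑ w, prob μ (fun ω => (A ω, W ω)) (a, w)
            * Real.log (prob μ (fun ω => (A ω, W ω)) (a, w)) := by
          rw [Finset.sum_mul]
      _ = _ := by rw [hq1 a, one_mul]
  rw [expand, eAW]
  rw [Finset.sum_congr rfl fun y _ => Finset.sum_congr rfl fun a _ =>
    Finset.sum_congr rfl fun w _ => key a y w]
  rw [Finset.sum_congr rfl fun y _ => Finset.sum_congr rfl fun a _ =>
    Finset.sum_add_distrib]
  rw [Finset.sum_congr rfl fun y _ => Finset.sum_add_distrib]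
  rw [Finset.sum_add_distrib, t1, t2]
  ring

lemma sum_comm3 {A B Γ : Type} [Fintype A] [Fintype B] [Fintype Γ] (F : A → B → Γ → ℝ) :
    ∑ a, ∑ b, ∑ c, F a b c = ∑ b, ∑ c, ∑ a, F a b c := by
  rw [Finset.sum_comm]
  exact Finset.sum_congr rfl fun b _ => Finset.sum_comm

section Helpers
variable {Ω 𝒳 𝒴 γ : Type} [Fintype Ω]
    [Fintype 𝒳] [DecidableEq 𝒳] [Fintype 𝒴] [DecidableEq 𝒴]
    [Fintype γ] [DecidableEq γ]

lemma full_joint (μ : Ω → ℝ) (hμ0 : ∀ ω, 0 ≤ μ ω) {n : ℕ}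
    (Q : 𝒳 → 𝒴 → ℝ)
    (X : Fin n → Ω → 𝒳) (Y : Fin n → Ω → 𝒴) (C : Ω → γ)
    (hch : ∀ (xs : Fin n → 𝒳) (c : γ) (ys : Fin n → 𝒴),
      0 < prob μ (fun ω => ((fun i => X i ω), C ω)) (xs, c) →
      prob μ (fun ω => ((fun i => Y i ω), (fun i => X i ω), C ω)) (ys, xs, c) =
        (∏ i, Q (xs i) (ys i)) * prob μ (fun ω => ((fun i => X i ω), C ω)) (xs, c)) :
    ∀ (ys : Fin n → 𝒴) (xs : Fin n → 𝒳) (c : γ),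
      prob μ (fun ω => ((fun i => Y i ω), (fun i => X i ω), C ω)) (ys, xs, c) =
        (∏ i, Q (xs i) (ys i)) * prob μ (fun ω => ((fun i => X i ω), C ω)) (xs, c) := by
  intro ys xs c
  rcases (prob_nonneg μ hμ0 (fun ω => ((fun i => X i ω), C ω)) (xs, c)).lt_or_eq
    with hp | hp
  · exact hch xs c ys hp
  · have hsum : prob μ (fun ω => ((fun i => X i ω), C ω)) (xs, c)
        = ∑ t : (Fin n → 𝒴) × ((Fin n → 𝒳) × γ),
            if t.2 = (xs, c)
            then prob μ (fun ω => ((fun i => Y i ω), (fun i => X i ω), C ω)) t else 0 :=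
      prob_comp μ (fun ω => ((fun i => Y i ω), (fun i => X i ω), C ω))
        (fun t => t.2) (xs, c)
    have hzero : ∀ t ∈ (Finset.univ : Finset ((Fin n → 𝒴) × ((Fin n → 𝒳) × γ))),
        (if t.2 = (xs, c)
          then prob μ (fun ω => ((fun i => Y i ω), (fun i => X i ω), C ω)) t else 0) = 0 := by
      refine (Finset.sum_eq_zero_iff_of_nonneg fun t _ => ?_).1 (hsum ▸ hp.symm)
      split
      · exact prob_nonneg μ hμ0 _ _
      · exact le_rfl
    have := hzero (ys, (xs, c)) (Finset.mem_univ _)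
    rw [if_pos rfl] at this
    rw [this, ← hp, mul_zero]

lemma sum_prob_eval (μ : Ω → ℝ) {n : ℕ}
    (X : Fin n → Ω → 𝒳) (j : Fin n) (g : 𝒳 → ℝ) :
    ∑ xs : Fin n → 𝒳, prob μ (fun ω => fun i => X i ω) xs * g (xs j)
      = ∑ x, prob μ (X j) x * g x := by
  have hm : ∀ x, prob μ (X j) x
      = ∑ xs : Fin n → 𝒳, if xs j = x then prob μ (fun ω => fun i => X i ω) xs else 0 :=
    fun x => prob_comp μ (fun ω => fun i => X i ω) (fun xs => xs j) x
  calc ∑ xs : Fin n → 𝒳, prob μ (fun ω => fun i => X i ω) xs * g (xs j)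
      = ∑ xs : Fin n → 𝒳, ∑ x, if xs j = x
          then prob μ (fun ω => fun i => X i ω) xs * g x else 0 := by
        refine Finset.sum_congr rfl fun xs _ => ?_
        rw [Finset.sum_ite_eq]
        simp
    _ = ∑ x, ∑ xs : Fin n → 𝒳, if xs j = x
          then prob μ (fun ω => fun i => X i ω) xs * g x else 0 := Finset.sum_comm
    _ = ∑ x, prob μ (X j) x * g x := by
        refine Finset.sum_congr rfl fun x _ => ?_
        rw [hm x, Finset.sum_mul]
        refine Finset.sum_congr rfl fun xs _ => ?_
        rw [ite_mul, zero_mul]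

lemma chan_marg (μ : Ω → ℝ) {n : ℕ}
    (Q : 𝒳 → 𝒴 → ℝ) (hQ1 : ∀ x, ∑ y, Q x y = 1)
    (X : Fin n → Ω → 𝒳) (Y : Fin n → Ω → 𝒴) (C : Ω → γ)
    (hν : ∀ (ys : Fin n → 𝒴) (xs : Fin n → 𝒳) (c : γ),
      prob μ (fun ω => ((fun i => Y i ω), (fun i => X i ω), C ω)) (ys, xs, c) =
        (∏ i, Q (xs i) (ys i)) * prob μ (fun ω => ((fun i => X i ω), C ω)) (xs, c))
    (i : Fin n) (y : 𝒴) (x : 𝒳) (u : Fin i.val → 𝒴) (c : γ) :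
    prob μ (fun ω => (Y i ω, X i ω,
        (fun j : Fin i.val => Y ⟨j.val, j.isLt.trans i.isLt⟩ ω), C ω)) (y, x, u, c)
      = Q x y * prob μ (fun ω => (X i ω,
          (fun j : Fin i.val => Y ⟨j.val, j.isLt.trans i.isLt⟩ ω), C ω)) (x, u, c) := by
  have hL := prob_comp μ (fun ω => ((fun i => Y i ω), (fun i => X i ω), C ω))
      (fun t => (t.1 i, t.2.1 i,
        (fun j : Fin i.val => t.1 ⟨j.val, j.isLt.trans i.isLt⟩), t.2.2))
      (y, x, u, c)
  have hR := prob_comp μ (fun ω => ((fun i => Y i ω), (fun i => X i ω), C ω))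
      (fun t => (t.2.1 i,
        (fun j : Fin i.val => t.1 ⟨j.val, j.isLt.trans i.isLt⟩), t.2.2))
      (x, u, c)
  refine hL.trans (Eq.trans ?_ (congrArg (fun r => Q x y * r) hR.symm))
  simp only [Fintype.sum_prod_type]
  simp only [hν, Prod.mk.injEq]
  rw [sum_comm3]
  conv_rhs => rw [sum_comm3]
  rw [Finset.mul_sum]
  refine Finset.sum_congr rfl fun xs _ => ?_
  rw [Finset.mul_sum]
  refine Finset.sum_congr rfl fun c' _ => ?_
  by_cases hxc : xs i = x ∧ c' = c
  · obtain ⟨hx, hc⟩ := hxc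
    have hc1 : ∀ ys : Fin n → 𝒴,
        (ys i = y ∧ xs i = x ∧
          (fun j : Fin i.val => ys ⟨j.val, j.isLt.trans i.isLt⟩) = u ∧ c' = c)
        ↔ (ys i = y ∧ (fun j : Fin i.val => ys ⟨j.val, j.isLt.trans i.isLt⟩) = u) :=
      fun ys => ⟨fun ⟨a, _, b, _⟩ => ⟨a, b⟩, fun ⟨a, b⟩ => ⟨a, hx, b, hc⟩⟩
    have hc2 : ∀ ys : Fin n → 𝒴,
        (xs i = x ∧
          (fun j : Fin i.val => ys ⟨j.val, j.isLt.trans i.isLt⟩) = u ∧ c' = c)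
        ↔ ((fun j : Fin i.val => ys ⟨j.val, j.isLt.trans i.isLt⟩) = u) :=
      fun ys => ⟨fun ⟨_, b, _⟩ => b, fun b => ⟨hx, b, hc⟩⟩
    rw [Finset.sum_congr rfl fun ys _ => if_congr (hc1 ys) rfl rfl]
    rw [Finset.sum_congr rfl fun ys _ => if_congr (hc2 ys) rfl rfl]
    have step : ∀ (cond : Prop) [Decidable cond] (A B : ℝ),
        (if cond then A * B else 0) = (if cond then A else 0) * B := by
      intro cond _ A B
      split <;> simp
    rw [Finset.sum_congr rfl fun ys _ => step _ _ _,
        Finset.sum_congr rfl fun ys _ => step _ _ _,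
        ← Finset.sum_mul, ← Finset.sum_mul,
        chan_core (fun k => Q (xs k)) (fun k => hQ1 (xs k)) i y u, hx]
    ring
  · rw [Finset.sum_eq_zero fun ys _ => if_neg fun hh => hxc ⟨hh.2.1, hh.2.2.2⟩,
       Finset.sum_eq_zero fun ys _ => if_neg fun hh => hxc ⟨hh.1, hh.2.2⟩, mul_zero]
end Helpers

section PE
variable {Ω 𝒴 γ : Type} [Fintype Ω] [Fintype 𝒴] [DecidableEq 𝒴]
    [Fintype γ] [DecidableEq γ]

noncomputable def prefEnt (μ : Ω → ℝ) {n : ℕ} (hn : 0 < n)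
    (Y : Fin n → Ω → 𝒴) (C : Ω → γ) (k : ℕ) : ℝ :=
  entH μ (fun ω => ((fun j : Fin k =>
    if h : j.val < n then Y ⟨j.val, h⟩ ω else Y ⟨0, hn⟩ ω), C ω))

lemma prefEnt_zero (μ : Ω → ℝ) {n : ℕ} (hn : 0 < n)
    (Y : Fin n → Ω → 𝒴) (C : Ω → γ) :
    prefEnt μ hn Y C 0 = entH μ C := by
  unfold prefEnt
  have hfun : (fun ω => ((fun j : Fin 0 =>
        if h : j.val < n then Y ⟨j.val, h⟩ ω else Y ⟨0, hn⟩ ω), C ω))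
      = fun ω => ((fun j : Fin 0 => (j.elim0 : 𝒴)), C ω) := by
    funext ω
    congr 1
    funext j
    exact j.elim0
  rw [hfun]
  exact entH_comp_inj μ C (fun c => ((fun j : Fin 0 => (j.elim0 : 𝒴)), c))
    (fun a b h => congrArg Prod.snd h)

lemma prefEnt_top (μ : Ω → ℝ) {n : ℕ} (hn : 0 < n)
    (Y : Fin n → Ω → 𝒴) (C : Ω → γ) :
    prefEnt μ hn Y C n = entH μ (fun ω => ((fun i => Y i ω), C ω)) := by
  unfold prefEnt
  congr 1
  funext ω
  congr 1
  funext j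
  rw [dif_pos j.isLt]

lemma prefEnt_eq (μ : Ω → ℝ) {n : ℕ} (hn : 0 < n)
    (Y : Fin n → Ω → 𝒴) (C : Ω → γ) (i : Fin n) :
    entH μ (fun ω => ((fun j : Fin i.val => Y ⟨j.val, j.isLt.trans i.isLt⟩ ω), C ω))
      = prefEnt μ hn Y C i.val := by
  unfold prefEnt
  congr 1
  funext ω
  congr 1
  funext j
  rw [dif_pos (j.isLt.trans i.isLt)]

lemma prefEnt_succ (μ : Ω → ℝ) {n : ℕ} (hn : 0 < n)
    (Y : Fin n → Ω → 𝒴) (C : Ω → γ) (i : Fin n) :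
    entH μ (fun ω => (Y i ω,
        (fun j : Fin i.val => Y ⟨j.val, j.isLt.trans i.isLt⟩ ω), C ω))
      = prefEnt μ hn Y C (i.val + 1) := by
  unfold prefEnt
  have he : Function.Injective
      (fun q : (Fin (i.val + 1) → 𝒴) × γ =>
        (q.1 (Fin.last i.val), (fun j : Fin i.val => q.1 j.castSucc), q.2)) := by
    rintro ⟨f, c⟩ ⟨f', c'⟩ h
    simp only [Prod.mk.injEq] at h
    obtain ⟨h1, h2, h3⟩ := h
    refine Prod.ext ?_ h3
    funext j
    refine Fin.lastCases ?_ ?_ j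
    · exact h1
    · intro j'
      exact congrFun h2 j'
  have := entH_comp_inj μ
    (fun ω => ((fun j : Fin (i.val + 1) =>
        if h : j.val < n then Y ⟨j.val, h⟩ ω else Y ⟨0, hn⟩ ω), C ω))
    _ he
  refine Eq.trans ?_ this
  congr 1
  funext ω
  simp only [Fin.val_last, Fin.coe_castSucc]
  congr 1
  · rw [dif_pos i.isLt]
  congr 1
  funext j
  rw [dif_pos (j.isLt.trans i.isLt)]
end PE

lemma swap_inj {A B D : Type} :
    Function.Injective (fun t : A × B × D => (t.2.1, t.1, t.2.2)) := by
  rintro ⟨a, b, d⟩ ⟨a', b', d'⟩ h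
  simp only [Prod.mk.injEq] at h ⊢
  exact ⟨h.2.1, h.1, h.2.2⟩

/-- Memoryless-channel chain rule: if `Y^n` is produced from `X^n` by the memoryless
channel `Q`, conditionally independently of `C`, then
`I(X^n;Y^n|C) = ∑ i, I(X_i;Y_i | (Y^{i−1}, C))`. -/
theorem stmt5 {Ω 𝒳 𝒴 γ : Type} [Fintype Ω]
    [Fintype 𝒳] [DecidableEq 𝒳] [Nonempty 𝒳]
    [Fintype 𝒴] [DecidableEq 𝒴] [Nonempty 𝒴]
    [Fintype γ] [DecidableEq γ] [Nonempty γ]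
    (μ : Ω → ℝ) (hμ0 : ∀ ω, 0 ≤ μ ω) (hμ1 : ∑ ω, μ ω = 1)
    (n : ℕ) (hn : 0 < n)
    (Q : 𝒳 → 𝒴 → ℝ) (hQ0 : ∀ x y, 0 ≤ Q x y) (hQ1 : ∀ x, ∑ y, Q x y = 1)
    (X : Fin n → Ω → 𝒳) (Y : Fin n → Ω → 𝒴) (C : Ω → γ)
    (hch : ∀ (xs : Fin n → 𝒳) (c : γ) (ys : Fin n → 𝒴),
      0 < prob μ (fun ω => ((fun i => X i ω), C ω)) (xs, c) →
      prob μ (fun ω => ((fun i => Y i ω), (fun i => X i ω), C ω)) (ys, xs, c) =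
        (∏ i, Q (xs i) (ys i)) * prob μ (fun ω => ((fun i => X i ω), C ω)) (xs, c)) :
    condMI μ (fun ω => fun i => X i ω) (fun ω => fun i => Y i ω) C =
      ∑ i : Fin n, condMI μ (X i) (Y i)
        (fun ω => ((fun j : Fin i.val => Y ⟨j.val, j.isLt.trans i.isLt⟩ ω), C ω)) := by
  have hν := full_joint μ hμ0 Q X Y C hch
  have hQ'1 : ∀ xs : Fin n → 𝒳, ∑ ys : Fin n → 𝒴, ∏ k, Q (xs k) (ys k) = 1 := by
    intro xs
    refine Eq.trans ((Fintype.prod_sum fun k y => Q (xs k) y).symm) ?_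
    simp [hQ1]
  -- the common "channel entropy" quantity
  have hLfull : entH μ (fun ω => ((fun i => Y i ω), (fun i => X i ω), C ω))
      = entH μ (fun ω => ((fun i => X i ω), C ω))
        - ∑ xs : Fin n → 𝒳, prob μ (fun ω => fun i => X i ω) xs *
            ∑ ys : Fin n → 𝒴, (∏ k, Q (xs k) (ys k))
              * Real.log (∏ k, Q (xs k) (ys k)) :=
    condH_channel μ (fun ω => fun i => X i ω) C (fun ω => fun i => Y i ω)
      (fun xs ys => ∏ k, Q (xs k) (ys k)) hQ'1 (fun ys xs c => hν ys xs c)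
  have hTfix : ∑ xs : Fin n → 𝒳, prob μ (fun ω => fun i => X i ω) xs *
        ∑ ys : Fin n → 𝒴, (∏ k, Q (xs k) (ys k)) * Real.log (∏ k, Q (xs k) (ys k))
      = ∑ i : Fin n, ∑ x, prob μ (X i) x * ∑ y', Q x y' * Real.log (Q x y') := by
    calc ∑ xs : Fin n → 𝒳, prob μ (fun ω => fun i => X i ω) xs *
          ∑ ys : Fin n → 𝒴, (∏ k, Q (xs k) (ys k)) * Real.log (∏ k, Q (xs k) (ys k))
        = ∑ xs : Fin n → 𝒳, ∑ j : Fin n, prob μ (fun ω => fun i => X i ω) xs *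
            ∑ y', Q (xs j) y' * Real.log (Q (xs j) y') := by
          refine Finset.sum_congr rfl fun xs _ => ?_
          rw [sum_pi_mul_log (fun k => Q (xs k)) (fun k => hQ1 (xs k)), Finset.mul_sum]
      _ = ∑ j : Fin n, ∑ xs : Fin n → 𝒳, prob μ (fun ω => fun i => X i ω) xs *
            ∑ y', Q (xs j) y' * Real.log (Q (xs j) y') := Finset.sum_comm
      _ = ∑ i : Fin n, ∑ x, prob μ (X i) x * ∑ y', Q x y' * Real.log (Q x y') :=
          Finset.sum_congr rfl fun j _ =>
            sum_prob_eval μ X j (fun x => ∑ y', Q x y' * Real.log (Q x y'))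
  have hterm : ∀ i : Fin n,
      condMI μ (X i) (Y i)
          (fun ω => ((fun j : Fin i.val => Y ⟨j.val, j.isLt.trans i.isLt⟩ ω), C ω))
        = prefEnt μ hn Y C (i.val + 1) - prefEnt μ hn Y C i.val
          + ∑ x, prob μ (X i) x * ∑ y', Q x y' * Real.log (Q x y') := by
    intro i
    have hcc : entH μ (fun ω => (Y i ω, X i ω,
          (fun j : Fin i.val => Y ⟨j.val, j.isLt.trans i.isLt⟩ ω), C ω))
        = entH μ (fun ω => (X i ω,
            (fun j : Fin i.val => Y ⟨j.val, j.isLt.trans i.isLt⟩ ω), C ω))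
          - ∑ x, prob μ (X i) x * ∑ y', Q x y' * Real.log (Q x y') :=
      condH_channel μ (X i)
        (fun ω => ((fun j : Fin i.val => Y ⟨j.val, j.isLt.trans i.isLt⟩ ω), C ω))
        (Y i) Q hQ1
        (fun y a w => by
          obtain ⟨u, c⟩ := w
          exact chan_marg μ Q hQ1 X Y C hν i y a u c)
    have hswap : entH μ (fun ω => (X i ω, Y i ω,
          (fun j : Fin i.val => Y ⟨j.val, j.isLt.trans i.isLt⟩ ω), C ω))
        = entH μ (fun ω => (Y i ω, X i ω,
            (fun j : Fin i.val => Y ⟨j.val, j.isLt.trans i.isLt⟩ ω), C ω)) :=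
      entH_comp_inj μ (fun ω => (Y i ω, X i ω,
        (fun j : Fin i.val => Y ⟨j.val, j.isLt.trans i.isLt⟩ ω), C ω))
        (fun t => (t.2.1, t.1, t.2.2)) swap_inj
    have h2 := prefEnt_succ μ hn Y C i
    have h4 := prefEnt_eq μ hn Y C i
    show entH μ (fun ω => (X i ω,
            (fun j : Fin i.val => Y ⟨j.val, j.isLt.trans i.isLt⟩ ω), C ω))
        + entH μ (fun ω => (Y i ω,
            (fun j : Fin i.val => Y ⟨j.val, j.isLt.trans i.isLt⟩ ω), C ω))
        - entH μ (fun ω => (X i ω, Y i ω,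
            (fun j : Fin i.val => Y ⟨j.val, j.isLt.trans i.isLt⟩ ω), C ω))
        - entH μ (fun ω => ((fun j : Fin i.val => Y ⟨j.val, j.isLt.trans i.isLt⟩ ω), C ω))
        = _
    rw [hswap, hcc, h2, h4]
    ring
  have htel : ∑ i : Fin n, (prefEnt μ hn Y C (i.val + 1) - prefEnt μ hn Y C i.val)
      = prefEnt μ hn Y C n - prefEnt μ hn Y C 0 := by
    refine Eq.trans (Fin.sum_univ_eq_sum_range
      (fun m => prefEnt μ hn Y C (m + 1) - prefEnt μ hn Y C m) n) ?_
    exact Finset.sum_range_sub (fun m => prefEnt μ hn Y C m) n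
  have hR : ∑ i : Fin n, condMI μ (X i) (Y i)
        (fun ω => ((fun j : Fin i.val => Y ⟨j.val, j.isLt.trans i.isLt⟩ ω), C ω))
      = entH μ (fun ω => ((fun i => Y i ω), C ω)) - entH μ C
        + ∑ i : Fin n, ∑ x, prob μ (X i) x * ∑ y', Q x y' * Real.log (Q x y') := by
    rw [Finset.sum_congr rfl fun i _ => hterm i, Finset.sum_add_distrib]
    congr 1
    rw [htel, prefEnt_top, prefEnt_zero]
  have hswapF : entH μ (fun ω => ((fun i => X i ω), (fun i => Y i ω), C ω))
      = entH μ (fun ω => ((fun i => Y i ω), (fun i => X i ω), C ω)) :=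
    entH_comp_inj μ (fun ω => ((fun i => Y i ω), (fun i => X i ω), C ω))
      (fun t => (t.2.1, t.1, t.2.2)) swap_inj
  have hL2 : condMI μ (fun ω => fun i => X i ω) (fun ω => fun i => Y i ω) C
      = entH μ (fun ω => ((fun i => Y i ω), C ω)) - entH μ C
        + ∑ i : Fin n, ∑ x, prob μ (X i) x * ∑ y', Q x y' * Real.log (Q x y') := by
    show entH μ (fun ω => ((fun i => X i ω), C ω))
        + entH μ (fun ω => ((fun i => Y i ω), C ω))
        - entH μ (fun ω => ((fun i => X i ω), (fun i => Y i ω), C ω))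
        - entH μ C = _
    rw [hswapF, hLfull, hTfix]
    ring
  exact hL2.trans hR.symm
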